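/- Let u : ℝⁿ → ℝ ∪ {+∞} be lower semicontinuous, convex, and not identically +∞. Let η ⊂ ℝⁿ × ℝⁿ be compact and s > 0. If a sequence (u_k) of such convex functions epi-converges to u, then limsup_{k→∞} Hⁿ(P_s(u_k, η)) ≤ Hⁿ(P_s(u, η)). Moreover, the set P_s(u, η) is compact. -/

import Mathlib

open Filter Topology MeasureTheory
open scoped RealInnerProductSpace ENNReal Classical

noncomputable section

/-- Euclidean space ℝⁿ. -/
abbrev En (n : ℕ) := EuclideanSpace ℝ (Fin n)

/-- Convexity of an `EReal`-valued function, via convexity of its epigraph. -/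
def ConvexFn {n : ℕ} (u : En n → EReal) : Prop :=
  Convex ℝ {p : En n × ℝ | u p.1 ≤ (p.2 : EReal)}

/-- The subdifferential of `u` at `x`. -/
def subdiff {n : ℕ} (u : En n → EReal) (x : En n) : Set (En n) :=
  {y | ∀ z, u x + (⟪z - x, y⟫ : EReal) ≤ u z}

/-- The convex (Legendre–Fenchel) conjugate of `u`. -/
def conj {n : ℕ} (u : En n → EReal) (y : En n) : EReal :=
  ⨆ x, ((⟪x, y⟫ : EReal) - u x)

/-- Graph of the subdifferential map. -/
def sgraph {n : ℕ} (u : En n → EReal) : Set (En n × En n) :=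
  {p | p.2 ∈ subdiff u p.1}

/-- Parallel set `P_s(u, η)`. -/
def parallelSet {n : ℕ} (u : En n → EReal) (η : Set (En n × En n)) (s : ℝ) : Set (En n) :=
  {z | ∃ p ∈ η, p.2 ∈ subdiff u p.1 ∧ z = p.1 + s • p.2}

/-- Convex indicator function of a set. -/
def indFn {n : ℕ} (K : Set (En n)) (x : En n) : EReal :=
  if x ∈ K then 0 else ⊤

/-- Lipschitz regularization (Pasch–Hausdorff envelope) `reg_r u = (u* + I_{B_{1/r}})*`. -/
def regLip {n : ℕ} (u : En n → EReal) (r : ℝ) : En n → EReal :=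
  conj (fun y => conj u y + indFn (Metric.closedBall (0 : En n) (1 / r)) y)

/-- Epi-convergence of a sequence of `EReal`-valued functions. -/
def EpiConverges {n : ℕ} (uk : ℕ → En n → EReal) (u : En n → EReal) : Prop :=
  ∀ x : En n,
    (∀ xk : ℕ → En n, Filter.Tendsto xk Filter.atTop (nhds x) →
        u x ≤ Filter.liminf (fun k => uk k (xk k)) Filter.atTop) ∧
    (∃ xk : ℕ → En n, Filter.Tendsto xk Filter.atTop (nhds x) ∧
        Filter.Tendsto (fun k => uk k (xk k)) Filter.atTop (nhds (u x)))

/-- liminf along a subsequence dominates the liminf. -/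
lemma liminf_le_liminf_subseq {u : ℕ → EReal} {σ : ℕ → ℕ} (hσ : StrictMono σ) :
    Filter.liminf u Filter.atTop ≤ Filter.liminf (fun k => u (σ k)) Filter.atTop := by
  have h : Filter.map σ Filter.atTop ≤ Filter.atTop := hσ.tendsto_atTop
  calc liminf u atTop ≤ liminf u (map σ atTop) := liminf_le_liminf_of_le h
    _ = liminf (fun k => u (σ k)) atTop := by
        rw [Filter.liminf, Filter.liminf, Filter.map_map]; rfl

/-- liminf along a convergent sequence for a lower semicontinuous function. -/
lemma lsc_le_liminf_seq {n : ℕ} {u : En n → EReal} (hul : LowerSemicontinuous u)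
    {x : En n} {xk : ℕ → En n} (hx : Filter.Tendsto xk Filter.atTop (nhds x)) :
    u x ≤ Filter.liminf (fun k => u (xk k)) Filter.atTop := by
  refine le_trans (hul.le_liminf x) ?_
  calc liminf u (𝓝 x) ≤ liminf u (map xk atTop) := liminf_le_liminf_of_le hx
    _ = liminf (fun k => u (xk k)) atTop := by
        rw [Filter.liminf, Filter.liminf, Filter.map_map]; rfl

/-- Limits of subgradients of an epi-convergent family are subgradients of the limit. -/
lemma subdiff_limit {n : ℕ} {u : En n → EReal} {vk : ℕ → En n → EReal}
    (hlow : ∀ (w : En n) (wk : ℕ → En n), Filter.Tendsto wk Filter.atTop (nhds w) →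
      u w ≤ Filter.liminf (fun k => vk k (wk k)) Filter.atTop)
    (hrec : ∀ z : En n, ∃ zk : ℕ → En n, Filter.Tendsto zk Filter.atTop (nhds z) ∧
      Filter.Tendsto (fun k => vk k (zk k)) Filter.atTop (nhds (u z)))
    {x y : En n} {xk yk : ℕ → En n}
    (hx : Filter.Tendsto xk Filter.atTop (nhds x))
    (hy : Filter.Tendsto yk Filter.atTop (nhds y))
    (hsub : ∀ k, yk k ∈ subdiff (vk k) (xk k)) :
    y ∈ subdiff u x := by
  intro z
  obtain ⟨zk, hz, hvz⟩ := hrec z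
  have hc : Filter.Tendsto (fun k => (⟪zk k - xk k, yk k⟫ : ℝ)) atTop (𝓝 ⟪z - x, y⟫) :=
    (hz.sub hx).inner hy
  have hcE : Filter.Tendsto (fun k => ((⟪zk k - xk k, yk k⟫ : ℝ) : EReal)) atTop
      (𝓝 ((⟪z - x, y⟫ : ℝ) : EReal)) := (continuous_coe_real_ereal.tendsto _).comp hc
  calc u x + ((⟪z - x, y⟫ : ℝ) : EReal)
      ≤ liminf (fun k => vk k (xk k)) atTop
          + liminf (fun k => ((⟪zk k - xk k, yk k⟫ : ℝ) : EReal)) atTop := by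
        exact add_le_add (hlow x xk hx) (le_of_eq hcE.liminf_eq.symm)
    _ ≤ liminf (fun k => vk k (xk k) + ((⟪zk k - xk k, yk k⟫ : ℝ) : EReal)) atTop :=
        EReal.le_liminf_add
    _ ≤ liminf (fun k => vk k (zk k)) atTop :=
        liminf_le_liminf (Filter.Eventually.of_forall fun k => hsub k (zk k))
    _ = u z := hvz.liminf_eq

/-- The liminf inequality of epi-convergence also holds along subsequences. -/
lemma epi_liminf_subseq {n : ℕ} {uk : ℕ → En n → EReal} {u : En n → EReal}
    (hconv : EpiConverges uk u) {σ : ℕ → ℕ} (hσ : StrictMono σ) (w : En n) (wk : ℕ → En n)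
    (hw : Filter.Tendsto wk Filter.atTop (nhds w)) :
    u w ≤ Filter.liminf (fun k => uk (σ k) (wk k)) Filter.atTop := by
  classical
  set X : ℕ → En n := fun j => if h : ∃ k, σ k = j then wk h.choose else w with hXdef
  have hXσ : ∀ k, X (σ k) = wk k := by
    intro k
    have h : ∃ k', σ k' = σ k := ⟨k, rfl⟩
    simp only [hXdef, dif_pos h]
    exact congrArg wk (hσ.injective h.choose_spec)
  have hXt : Filter.Tendsto X Filter.atTop (nhds w) := by
    rw [tendsto_atTop'] at hw ⊢
    intro U hU
    obtain ⟨K, hK⟩ := hw U hU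
    refine ⟨σ K, fun j hj => ?_⟩
    by_cases h : ∃ k, σ k = j
    · simp only [hXdef, dif_pos h]
      apply hK
      by_contra hlt
      push_neg at hlt
      have h2 := hσ hlt
      rw [h.choose_spec] at h2
      exact absurd hj (not_le.2 h2)
    · simp only [hXdef, dif_neg h]
      exact mem_of_mem_nhds hU
  refine le_trans ((hconv w).1 X hXt) ?_
  have h3 := liminf_le_liminf_subseq (u := fun j => uk j (X j)) hσ
  simpa only [hXσ] using h3

theorem limsup_volume_parallelSet (n : ℕ) (u : En n → EReal) (uk : ℕ → En n → EReal)
    (hu : ConvexFn u) (hul : LowerSemicontinuous u) (hup : ∃ x, u x ≠ ⊤)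
    (huk : ∀ k, ConvexFn (uk k)) (hukl : ∀ k, LowerSemicontinuous (uk k))
    (hukp : ∀ k, ∃ x, uk k x ≠ ⊤)
    (η : Set (En n × En n)) (hη : IsCompact η) (s : ℝ) (hs : 0 < s)
    (hconv : EpiConverges uk u) :
    Filter.limsup (fun k => volume (parallelSet (uk k) η s)) Filter.atTop
        ≤ volume (parallelSet u η s) ∧
      IsCompact (parallelSet u η s) := by
  -- Compactness part
  have hlowc : ∀ (w : En n) (wk : ℕ → En n), Filter.Tendsto wk Filter.atTop (nhds w) →
      u w ≤ Filter.liminf (fun k => u (wk k)) Filter.atTop :=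
    fun w wk hw => lsc_le_liminf_seq hul hw
  have hrecc : ∀ z : En n, ∃ zk : ℕ → En n, Filter.Tendsto zk Filter.atTop (nhds z) ∧
      Filter.Tendsto (fun k => u (zk k)) Filter.atTop (nhds (u z)) :=
    fun z => ⟨fun _ => z, tendsto_const_nhds, tendsto_const_nhds⟩
  have hclosed : IsClosed (sgraph u) := by
    refine IsSeqClosed.isClosed ?_
    intro p q hp hq
    have hx : Filter.Tendsto (fun k => (p k).1) Filter.atTop (nhds q.1) :=
      (continuous_fst.tendsto q).comp hq
    have hy : Filter.Tendsto (fun k => (p k).2) Filter.atTop (nhds q.2) :=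
      (continuous_snd.tendsto q).comp hq
    exact subdiff_limit (vk := fun _ => u) hlowc hrecc hx hy (fun k => hp k)
  have hcont : Continuous (fun p : En n × En n => p.1 + s • p.2) :=
    continuous_fst.add (continuous_snd.const_smul s)
  have himg : parallelSet u η s = (fun p : En n × En n => p.1 + s • p.2) '' (η ∩ sgraph u) := by
    ext z
    constructor
    · rintro ⟨p, hpη, hps, rfl⟩
      exact ⟨p, ⟨hpη, hps⟩, rfl⟩
    · rintro ⟨p, ⟨hpη, hps⟩, rfl⟩
      exact ⟨p, hpη, hps, rfl⟩
  have hcompact : IsCompact (parallelSet u η s) := by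
    rw [himg]
    exact (hη.inter_right hclosed).image hcont
  refine ⟨?_, hcompact⟩
  -- Key: for every open superset U of the limit parallel set, eventually P_s(u_k,η) ⊆ U
  have key : ∀ U : Set (En n), IsOpen U → parallelSet u η s ⊆ U →
      ∀ᶠ k in Filter.atTop, parallelSet (uk k) η s ⊆ U := by
    intro U hU hPU
    by_contra hcon
    rw [Filter.not_eventually] at hcon
    have hfreq : ∃ᶠ k in Filter.atTop,
        ∃ p ∈ η, p.2 ∈ subdiff (uk k) p.1 ∧ p.1 + s • p.2 ∉ U := by
      refine hcon.mono fun k hk => ?_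
      rw [Set.not_subset] at hk
      obtain ⟨z, hz1, hz2⟩ := hk
      obtain ⟨p, hpη, hps, rfl⟩ := hz1
      exact ⟨p, hpη, hps, hz2⟩
    obtain ⟨φ, hφ, hP⟩ := Filter.extraction_of_frequently_atTop hfreq
    choose p hpη hpsub hpU using hP
    obtain ⟨q, hqη, ψ, hψ, hqt⟩ := hη.tendsto_subseq hpη
    set σ : ℕ → ℕ := φ ∘ ψ with hσdef
    have hσ : StrictMono σ := hφ.comp hψ
    have hx : Filter.Tendsto (fun k => (p (ψ k)).1) Filter.atTop (nhds q.1) :=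
      (continuous_fst.tendsto q).comp hqt
    have hy : Filter.Tendsto (fun k => (p (ψ k)).2) Filter.atTop (nhds q.2) :=
      (continuous_snd.tendsto q).comp hqt
    have hrec : ∀ z : En n, ∃ zk : ℕ → En n, Filter.Tendsto zk Filter.atTop (nhds z) ∧
        Filter.Tendsto (fun k => uk (σ k) (zk k)) Filter.atTop (nhds (u z)) := by
      intro z
      obtain ⟨zk, h1, h2⟩ := (hconv z).2
      exact ⟨fun k => zk (σ k), h1.comp hσ.tendsto_atTop, h2.comp hσ.tendsto_atTop⟩
    have hqsub : q.2 ∈ subdiff u q.1 :=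
      subdiff_limit (vk := fun k => uk (σ k))
        (fun w wk hw => epi_liminf_subseq hconv hσ w wk hw) hrec hx hy
        (fun k => hpsub (ψ k))
    have hqU : q.1 + s • q.2 ∈ U := hPU ⟨q, hqη, hqsub, rfl⟩
    have hlim : Filter.Tendsto (fun k => (p (ψ k)).1 + s • (p (ψ k)).2) Filter.atTop
        (nhds (q.1 + s • q.2)) := hx.add (hy.const_smul s)
    have hmem : q.1 + s • q.2 ∈ Uᶜ :=
      hU.isClosed_compl.mem_of_tendsto hlim
        (Filter.Eventually.of_forall fun k => hpU (ψ k))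
    exact hmem hqU
  -- Conclude via outer regularity
  by_contra hlt
  push_neg at hlt
  obtain ⟨U, hPU, hUopen, hUlt⟩ :=
    Set.exists_isOpen_lt_of_lt (μ := (volume : Measure (En n))) (parallelSet u η s) _ hlt
  have hev : ∀ᶠ k in Filter.atTop,
      volume (parallelSet (uk k) η s) ≤ volume U :=
    (key U hUopen hPU).mono fun k hk => measure_mono hk
  have : Filter.limsup (fun k => volume (parallelSet (uk k) η s)) Filter.atTop ≤ volume U :=
    Filter.limsup_le_of_le (by isBoundedDefault) hev
  exact absurd (lt_of_le_of_lt this hUlt) (lt_irrefl _)
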